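/- Let U ⊆ F_q³ be a set of q² − 2 points that does not determine the points of C, with ∑_{u∈U} u = (0,0,0). If σ₂(Y,Z,W) factors in F_q[Y,Z,W] as a product of two polynomials of degree 1, then U is extendable, i.e. there exists v ∈ F_q³ \ U such that U ∪ {v} does not determine the points of C. -/

import Mathlib

/-- The dot product on `F³`. -/
def dot3 {F : Type*} [Field F] (u v : F × F × F) : F :=
  u.1 * v.1 + u.2.1 * v.2.1 + u.2.2 * v.2.2

/-- The nondegenerate quadratic form `Q(t₀,t₁,t₂) = t₁² − t₀t₂` defining the conic `C`. -/
def quadQ {F : Type*} [Field F] (t : F × F × F) : F :=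
  t.2.1 ^ 2 - t.1 * t.2.2

/-- `U` does not determine the points of the conic `C`:
`Q(u − u') ≠ 0` for all distinct `u, u' ∈ U`. -/
def NoDetermine {F : Type*} [Field F] (U : Finset (F × F × F)) : Prop :=
  ∀ u ∈ U, ∀ u' ∈ U, u ≠ u' → quadQ (u - u') ≠ 0

/-- The line at infinity `l(y,z,w)` meets the conic `C`. -/
def MeetsConic {F : Type*} [Field F] (v : F × F × F) : Prop :=
  ∃ t : F × F × F, t ≠ 0 ∧ quadQ t = 0 ∧ dot3 v t = 0

/-- `σ_i(y,z,w)`: the `i`-th elementary symmetric function of the multiset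
`{u·(y,z,w) : u ∈ U}`. -/
def sigmaU {F : Type*} [Field F] (U : Finset (F × F × F)) (v : F × F × F) (i : ℕ) : F :=
  (U.val.map (fun u => dot3 u v)).esymm i

/-- The linear form `u₀Y + u₁Z + u₂W` in `F[Y,Z,W]` associated to `u ∈ F³`. -/
noncomputable def linForm {F : Type*} [Field F] (u : F × F × F) : MvPolynomial (Fin 3) F :=
  MvPolynomial.C u.1 * MvPolynomial.X 0 + MvPolynomial.C u.2.1 * MvPolynomial.X 1 +
    MvPolynomial.C u.2.2 * MvPolynomial.X 2

/-- `σ_i(Y,Z,W)`: the `i`-th elementary symmetric polynomial of the multiset of linear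
forms `{u₀Y + u₁Z + u₂W : u ∈ U}`, as a polynomial in `F[Y,Z,W]`. -/
noncomputable def sigmaPoly {F : Type*} [Field F] (U : Finset (F × F × F)) (i : ℕ) :
    MvPolynomial (Fin 3) F :=
  (U.val.map linForm).esymm i

section Lemmas
variable {F : Type*} [Field F]

/-- the basic 2-esymm identity over a Finset -/
theorem two_mul_esymm2 (U : Finset (F × F × F)) (f : (F × F × F) → F) :
    2 * (U.val.map f).esymm 2 = (∑ u ∈ U, f u) ^ 2 - ∑ u ∈ U, (f u) ^ 2 := by
  rw [Finset.esymm_map_val]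
  classical
  induction U using Finset.induction_on with
  | empty =>
      rw [show (Finset.powersetCard 2 (∅:Finset (F × F × F))) = ∅ by simp]
      simp
  | @insert a s ha ih =>
    rw [Finset.powersetCard_succ_insert ha]
    rw [Finset.sum_union]
    · rw [Finset.sum_image ?hinj]
      case hinj =>
        intro t ht t' ht' hins
        have h1 : t ⊆ s := (Finset.mem_powersetCard.mp ht).1
        have h2 : t' ⊆ s := (Finset.mem_powersetCard.mp ht').1
        have hat : a ∉ t := fun h => ha (h1 h)
        have hat' : a ∉ t' := fun h => ha (h2 h)
        have := congrArg (Finset.erase · a) hins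
        simpa [Finset.erase_insert hat, Finset.erase_insert hat'] using this
      have hprod : ∀ t ∈ s.powersetCard 1, (∏ x ∈ insert a t, f x) = f a * ∏ x ∈ t, f x := by
        intro t ht
        have h1 : t ⊆ s := (Finset.mem_powersetCard.mp ht).1
        exact Finset.prod_insert (fun h => ha (h1 h))
      rw [Finset.sum_congr rfl hprod, ← Finset.mul_sum]
      have h1 : ∑ t ∈ s.powersetCard 1, ∏ x ∈ t, f x = ∑ x ∈ s, f x := by
        rw [Finset.powersetCard_one, Finset.sum_map]
        simp
      rw [h1, Finset.sum_insert ha, Finset.sum_insert ha]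
      ring_nf
      ring_nf at ih
      linear_combination ih
    · rw [Finset.disjoint_left]
      intro t ht htim
      have h1 : t ⊆ s := (Finset.mem_powersetCard.mp ht).1
      obtain ⟨t', ht', rfl⟩ := Finset.mem_image.mp htim
      exact ha (h1 (Finset.mem_insert_self a t'))

end Lemmas

set_option linter.unusedSectionVars false
section Helpers
variable {F : Type*} [Field F] [Fintype F] [DecidableEq F]

theorem dot3_add_left {u v w : F × F × F} : dot3 (u + v) w = dot3 u w + dot3 v w := by
  simp only [dot3, Prod.fst_add, Prod.snd_add]; ring

theorem dot3_zero_left {w : F × F × F} : dot3 0 w = 0 := by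
  simp [dot3]

theorem dot3_sum (U : Finset (F × F × F)) (w : F × F × F) :
    ∑ u ∈ U, dot3 u w = dot3 (∑ u ∈ U, u) w := by
  classical
  induction U using Finset.induction_on with
  | empty => simp [dot3_zero_left]
  | @insert a s ha ih =>
    rw [Finset.sum_insert ha, Finset.sum_insert ha, dot3_add_left, ih]

theorem sum_univ_F (h2 : (2:F) ≠ 0) : ∑ x : F, x = 0 := by
  have key : ∑ x : F, x = ∑ x : F, -x := by
    exact Fintype.sum_bijective (fun x => -x) ⟨fun a b hab => neg_injective hab, fun a => ⟨-a, neg_neg a⟩⟩ _ _ (fun x => rfl) |>.symm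
  have : 2 * ∑ x : F, x = 0 := by
    rw [two_mul]
    nth_rewrite 2 [key]
    rw [← Finset.sum_add_distrib]
    simp
  exact (mul_eq_zero.mp this).resolve_left h2

theorem sum_sq_lin (h2 : (2:F) ≠ 0) (α β : F) :
    ∑ x : F × F, (α * x.1 + β * x.2) ^ 2 = 0 := by
  have hq : ((Fintype.card F : F)) = 0 := FiniteField.cast_card_eq_zero F
  have h1 : ∑ x : F, x = 0 := sum_univ_F h2
  rw [Fintype.sum_prod_type]
  have inner : ∀ a : F, ∑ b : F, (α * a + β * b) ^ 2
      = (Fintype.card F : F) * (α*a)^2 + β^2 * (∑ b : F, b^2) := by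
    intro a
    have : ∀ b : F, (α * a + β * b) ^ 2 = (α*a)^2 + (2*α*a*β)*b + β^2*b^2 := by
      intro b; ring
    rw [Finset.sum_congr rfl (fun b _ => this b)]
    rw [Finset.sum_add_distrib, Finset.sum_add_distrib, ← Finset.mul_sum, ← Finset.mul_sum]
    rw [h1, Finset.sum_const, Finset.card_univ, nsmul_eq_mul]
    ring
  rw [Finset.sum_congr rfl (fun a _ => inner a)]
  rw [Finset.sum_add_distrib, hq]
  simp

end Helpers

set_option linter.unusedSectionVars false
section Core
variable {F : Type*} [Field F] [Fintype F] [DecidableEq F]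

theorem dot3_smul_left {μ : F} {u w : F × F × F} : dot3 (μ • u) w = μ * dot3 u w := by
  simp only [dot3, Prod.smul_fst, Prod.smul_snd, smul_eq_mul]; ring

theorem dot3_neg_left {u w : F × F × F} : dot3 (-u) w = - dot3 u w := by
  simp only [dot3, Prod.fst_neg, Prod.snd_neg]; ring

theorem dot3_sub_left {u v w : F × F × F} : dot3 (u - v) w = dot3 u w - dot3 v w := by
  simp only [dot3, Prod.fst_sub, Prod.snd_sub]; ring

theorem dot3_comm {u w : F × F × F} : dot3 u w = dot3 w u := by
  simp only [dot3]; ring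

theorem dot3_add_right {u v w : F × F × F} : dot3 w (u + v) = dot3 w u + dot3 w v := by
  simp only [dot3, Prod.fst_add, Prod.snd_add]; ring

theorem dot3_smul_right {μ : F} {u w : F × F × F} : dot3 w (μ • u) = μ * dot3 w u := by
  simp only [dot3, Prod.smul_fst, Prod.smul_snd, smul_eq_mul]; ring

theorem quadQ_smul {μ : F} {t : F × F × F} : quadQ (μ • t) = μ ^ 2 * quadQ t := by
  simp only [quadQ, Prod.smul_fst, Prod.smul_snd, smul_eq_mul]; ring

theorem two_mul_sigmaU (U : Finset (F × F × F)) (w : F × F × F) :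
    2 * sigmaU U w 2 = (∑ u ∈ U, dot3 u w) ^ 2 - ∑ u ∈ U, (dot3 u w) ^ 2 :=
  two_mul_esymm2 U _

theorem coreLemma (h2 : (2:F) ≠ 0)
    (U : Finset (F × F × F)) (hU : NoDetermine U)
    (hUcard : U.card = Fintype.card F ^ 2 - 2)
    (hsum : ∑ u ∈ U, u = 0)
    (t w₁ w₂ : F × F × F) (hQt : quadQ t = 0)
    (htw₁ : dot3 t w₁ = 0) (htw₂ : dot3 t w₂ = 0)
    (hker : ∀ u : F × F × F, dot3 u w₁ = 0 → dot3 u w₂ = 0 → ∃ μ : F, u = μ • t)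
    (hsurj : ∀ s₁ s₂ : F, ∃ u : F × F × F, dot3 u w₁ = s₁ ∧ dot3 u w₂ = s₂)
    (hspan : ∀ w : F × F × F, dot3 t w = 0 → ∃ α β : F, w = α • w₁ + β • w₂) :
    ∃ a : F × F × F,
      (∀ u ∈ U, ∀ μ : F, u ≠ a + μ • t ∧ u ≠ -a + μ • t) ∧
      (∀ w : F × F × F, dot3 t w = 0 → sigmaU U w 2 = dot3 a w ^ 2) := by
  classical
  set φ : (F × F × F) → F × F := fun u => (dot3 u w₁, dot3 u w₂) with hφ
  have hinj : ∀ u ∈ U, ∀ u' ∈ U, φ u = φ u' → u = u' := by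
    intro u hu u' hu' heq
    by_contra hne
    have h1 : dot3 (u - u') w₁ = 0 := by
      rw [dot3_sub_left, sub_eq_zero]
      have := congrArg Prod.fst heq
      simpa [hφ] using this
    have h1' : dot3 (u - u') w₂ = 0 := by
      rw [dot3_sub_left, sub_eq_zero]
      have := congrArg Prod.snd heq
      simpa [hφ] using this
    obtain ⟨μ, hμ⟩ := hker _ h1 h1'
    exact hU u hu u' hu' hne (by rw [hμ, quadQ_smul, hQt]; ring)
  set S : Finset (F × F) := U.image φ with hS
  have hScard : S.card = U.card := Finset.card_image_of_injOn (fun x hx y hy => hinj x hx y hy)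
  have hqge : 2 ≤ Fintype.card F := Fintype.one_lt_card
  set T : Finset (F × F) := Finset.univ \ S with hT
  have hTcard : T.card = 2 := by
    rw [hT, Finset.card_sdiff_of_subset (Finset.subset_univ S), Finset.card_univ, Fintype.card_prod,
      hScard, hUcard]
    have h4 : 4 ≤ Fintype.card F * Fintype.card F := Nat.mul_le_mul hqge hqge
    have : Fintype.card F ^ 2 = Fintype.card F * Fintype.card F := sq (Fintype.card F)
    omega
  obtain ⟨A, B, hAB, hTeq⟩ := Finset.card_eq_two.mp hTcard
  -- sum over the whole plane is zero
  have hsum_univ : ∑ x : F × F, x = 0 := by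
    have key : ∑ x : F × F, x = ∑ x : F × F, -x :=
      (Fintype.sum_bijective (fun x => -x)
        ⟨fun a b hab => neg_injective hab, fun a => ⟨-a, neg_neg a⟩⟩ _ _ (fun _ => rfl)).symm
    have hs : (∑ x : F × F, x) + (∑ x : F × F, x) = 0 := by
      nth_rewrite 2 [key]
      rw [← Finset.sum_add_distrib]
      simp
    set s : F × F := ∑ x : F × F, x with hsdef
    have h1 : s.1 + s.1 = 0 := by
      have := congrArg Prod.fst hs; simpa using this
    have h2' : s.2 + s.2 = 0 := by
      have := congrArg Prod.snd hs; simpa using this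
    have e1 : s.1 = 0 := by
      have : (2:F) * s.1 = 0 := by rw [two_mul]; exact h1
      exact (mul_eq_zero.mp this).resolve_left h2
    have e2 : s.2 = 0 := by
      have : (2:F) * s.2 = 0 := by rw [two_mul]; exact h2'
      exact (mul_eq_zero.mp this).resolve_left h2
    exact Prod.ext e1 e2
  have hSsum : ∑ x ∈ S, x = 0 := by
    rw [hS, Finset.sum_image hinj]
    have : ∑ u ∈ U, φ u = (∑ u ∈ U, dot3 u w₁, ∑ u ∈ U, dot3 u w₂) := by
      rw [Prod.ext_iff]
      constructor
      · rw [Prod.fst_sum]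
      · rw [Prod.snd_sum]
    rw [this, dot3_sum, dot3_sum, hsum, dot3_zero_left, dot3_zero_left]
    rfl
  have hTsum : ∑ x ∈ T, x = 0 := by
    have := Finset.sum_sdiff (Finset.subset_univ S) (f := fun x : F × F => x)
    rw [hSsum, add_zero] at this
    rw [hT, this, hsum_univ]
  have hABsum : A + B = 0 := by
    rw [hTeq, Finset.sum_pair hAB] at hTsum
    exact hTsum
  have hBA : B = -A := eq_neg_of_add_eq_zero_right hABsum
  obtain ⟨a, ha1, ha2⟩ := hsurj A.1 A.2
  have hφa : φ a = A := Prod.ext ha1 ha2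
  have hAinT : A ∈ T := by rw [hTeq]; exact Finset.mem_insert_self A {B}
  have hBinT : B ∈ T := by rw [hTeq]; exact Finset.mem_insert_of_mem (Finset.mem_singleton_self B)
  have hAnotS : A ∉ S := (Finset.mem_sdiff.mp hAinT).2
  have hBnotS : B ∉ S := (Finset.mem_sdiff.mp hBinT).2
  refine ⟨a, ?_, ?_⟩
  · intro u hu μ
    constructor
    · intro heq
      apply hAnotS
      have : φ u = A := by
        rw [heq]
        apply Prod.ext
        · show dot3 (a + μ • t) w₁ = A.1
          rw [dot3_add_left, dot3_smul_left, htw₁, ha1]; ring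
        · show dot3 (a + μ • t) w₂ = A.2
          rw [dot3_add_left, dot3_smul_left, htw₂, ha2]; ring
      rw [← this]
      exact Finset.mem_image_of_mem φ hu
    · intro heq
      apply hBnotS
      have : φ u = B := by
        rw [heq, hBA]
        apply Prod.ext
        · show dot3 (-a + μ • t) w₁ = (-A).1
          rw [dot3_add_left, dot3_smul_left, dot3_neg_left, htw₁, ha1]
          simp
        · show dot3 (-a + μ • t) w₂ = (-A).2
          rw [dot3_add_left, dot3_smul_left, dot3_neg_left, htw₂, ha2]
          simp
      rw [← this]
      exact Finset.mem_image_of_mem φ hu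
  · intro w hw
    obtain ⟨α, β, hwab⟩ := hspan w hw
    have hdots : ∀ u : F × F × F, dot3 u w = α * dot3 u w₁ + β * dot3 u w₂ := by
      intro u
      rw [hwab]
      simp only [dot3, Prod.fst_add, Prod.snd_add, Prod.smul_fst, Prod.smul_snd, smul_eq_mul]
      ring
    set g : F × F → F := fun x => (α * x.1 + β * x.2) ^ 2 with hg
    have hgu : ∀ u : F × F × F, (dot3 u w) ^ 2 = g (φ u) := by
      intro u; rw [hdots u]
    have hp2 : ∑ u ∈ U, (dot3 u w) ^ 2 = ∑ x ∈ S, g x := by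
      rw [hS, Finset.sum_image hinj]
      exact Finset.sum_congr rfl (fun u _ => hgu u)
    have hsplit : ∑ x ∈ S, g x = (∑ x : F × F, g x) - ∑ x ∈ T, g x := by
      have := Finset.sum_sdiff (Finset.subset_univ S) (f := g)
      rw [← this, hT]; ring
    have huniv : ∑ x : F × F, g x = 0 := sum_sq_lin h2 α β
    have hTg : ∑ x ∈ T, g x = 2 * (α * A.1 + β * A.2) ^ 2 := by
      rw [hTeq, Finset.sum_pair hAB, hBA, hg]
      simp only [Prod.fst_neg, Prod.snd_neg]
      ring
    have hsum1 : ∑ u ∈ U, dot3 u w = 0 := by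
      rw [dot3_sum, hsum, dot3_zero_left]
    have hkey := two_mul_sigmaU U w
    rw [hsum1, hp2, hsplit, huniv, hTg] at hkey
    have hdaw : dot3 a w = α * A.1 + β * A.2 := by
      rw [hdots a, ha1, ha2]
    apply mul_left_cancel₀ h2
    rw [hkey, hdaw]; ring

end Core

set_option linter.unusedSectionVars false
section Key
variable {F : Type*} [Field F] [Fintype F] [DecidableEq F]

theorem keyLemma (h2 : (2:F) ≠ 0)
    (U : Finset (F × F × F)) (hU : NoDetermine U)
    (hUcard : U.card = Fintype.card F ^ 2 - 2)
    (hsum : ∑ u ∈ U, u = 0)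
    (t : F × F × F) (ht0 : t ≠ 0) (hQt : quadQ t = 0) :
    ∃ a w₁ w₂ : F × F × F,
      dot3 t w₁ = 0 ∧ dot3 t w₂ = 0 ∧
      (∀ u : F × F × F, dot3 u w₁ = 0 → dot3 u w₂ = 0 → ∃ μ : F, u = μ • t) ∧
      (∀ w : F × F × F, dot3 t w = 0 → ∃ α β : F, w = α • w₁ + β • w₂) ∧
      (∀ u ∈ U, ∀ μ : F, u ≠ a + μ • t ∧ u ≠ -a + μ • t) ∧
      (∀ w : F × F × F, dot3 t w = 0 → sigmaU U w 2 = dot3 a w ^ 2) := by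
  by_cases ht1 : t.1 ≠ 0
  · set w₁ : F × F × F := (t.2.1, -t.1, 0) with hw₁
    set w₂ : F × F × F := (t.2.2, 0, -t.1) with hw₂
    have htw₁ : dot3 t w₁ = 0 := by simp [dot3, hw₁]; ring
    have htw₂ : dot3 t w₂ = 0 := by simp [dot3, hw₂]; ring
    have hker : ∀ u : F × F × F, dot3 u w₁ = 0 → dot3 u w₂ = 0 → ∃ μ : F, u = μ • t := by
      intro u h1 h2'
      refine ⟨u.1 / t.1, ?_⟩
      simp only [dot3, hw₁, hw₂] at h1 h2'
      have e1 : u.1 * t.2.1 = u.2.1 * t.1 := by linear_combination h1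
      have e2 : u.1 * t.2.2 = u.2.2 * t.1 := by linear_combination h2'
      apply Prod.ext
      · simp; field_simp
      · apply Prod.ext
        · show u.2.1 = (u.1 / t.1) * t.2.1
          field_simp; linear_combination -e1
        · show u.2.2 = (u.1 / t.1) * t.2.2
          field_simp; linear_combination -e2
    have hsurj : ∀ s₁ s₂ : F, ∃ u : F × F × F, dot3 u w₁ = s₁ ∧ dot3 u w₂ = s₂ := by
      intro s₁ s₂
      refine ⟨(0, -s₁/t.1, -s₂/t.1), ?_, ?_⟩ <;>
      · simp only [dot3, hw₁, hw₂]
        field_simp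
        ring
    have hspan : ∀ w : F × F × F, dot3 t w = 0 → ∃ α β : F, w = α • w₁ + β • w₂ := by
      intro w hw
      refine ⟨-w.2.1 / t.1, -w.2.2 / t.1, ?_⟩
      simp only [dot3] at hw
      apply Prod.ext
      · show w.1 = (-w.2.1 / t.1) * t.2.1 + (-w.2.2 / t.1) * t.2.2
        field_simp; linear_combination hw
      · apply Prod.ext
        · show w.2.1 = (-w.2.1 / t.1) * (-t.1) + (-w.2.2 / t.1) * 0
          field_simp
          ring
        · show w.2.2 = (-w.2.1 / t.1) * 0 + (-w.2.2 / t.1) * (-t.1)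
          field_simp
          ring
    obtain ⟨a, hi, hii⟩ := coreLemma h2 U hU hUcard hsum t w₁ w₂ hQt htw₁ htw₂ hker hsurj hspan
    exact ⟨a, w₁, w₂, htw₁, htw₂, hker, hspan, hi, hii⟩
  · push_neg at ht1
    have ht21 : t.2.1 = 0 := by
      have := hQt
      simp only [quadQ, ht1] at this
      have : t.2.1 ^ 2 = 0 := by linear_combination this
      exact pow_eq_zero_iff (two_ne_zero) |>.mp this
    have ht22 : t.2.2 ≠ 0 := by
      intro h
      apply ht0
      apply Prod.ext ht1 (Prod.ext ht21 h)
    set w₁ : F × F × F := (1, 0, 0) with hw₁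
    set w₂ : F × F × F := (0, 1, 0) with hw₂
    have htw₁ : dot3 t w₁ = 0 := by simp [dot3, hw₁, ht1]
    have htw₂ : dot3 t w₂ = 0 := by simp [dot3, hw₂, ht21]
    have hker : ∀ u : F × F × F, dot3 u w₁ = 0 → dot3 u w₂ = 0 → ∃ μ : F, u = μ • t := by
      intro u h1 h2'
      simp only [dot3, hw₁, hw₂] at h1 h2'
      refine ⟨u.2.2 / t.2.2, ?_⟩
      apply Prod.ext
      · show u.1 = (u.2.2 / t.2.2) * t.1
        rw [ht1]; simpa using h1
      · apply Prod.ext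
        · show u.2.1 = (u.2.2 / t.2.2) * t.2.1
          rw [ht21]; simpa using h2'
        · show u.2.2 = (u.2.2 / t.2.2) * t.2.2
          field_simp
    have hsurj : ∀ s₁ s₂ : F, ∃ u : F × F × F, dot3 u w₁ = s₁ ∧ dot3 u w₂ = s₂ := by
      intro s₁ s₂
      refine ⟨(s₁, s₂, 0), ?_, ?_⟩ <;> simp [dot3, hw₁, hw₂]
    have hspan : ∀ w : F × F × F, dot3 t w = 0 → ∃ α β : F, w = α • w₁ + β • w₂ := by
      intro w hw
      simp only [dot3, ht1, ht21] at hw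
      have hw22 : w.2.2 = 0 := by
        have : t.2.2 * w.2.2 = 0 := by linear_combination hw
        rcases mul_eq_zero.mp this with h | h
        · exact absurd h ht22
        · exact h
      refine ⟨w.1, w.2.1, ?_⟩
      apply Prod.ext
      · simp [hw₁, hw₂]
      · apply Prod.ext <;> simp [hw22, hw₁, hw₂]
    obtain ⟨a, hi, hii⟩ := coreLemma h2 U hU hUcard hsum t w₁ w₂ hQt htw₁ htw₂ hker hsurj hspan
    exact ⟨a, w₁, w₂, htw₁, htw₂, hker, hspan, hi, hii⟩

end Key

set_option linter.unusedSectionVars false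
section Poly
variable {F : Type*} [Field F] [Fintype F] [DecidableEq F]

theorem eval_linForm (u w : F × F × F) :
    MvPolynomial.eval ![w.1, w.2.1, w.2.2] (linForm u) = dot3 u w := by
  simp [linForm, dot3]

theorem eval_sigmaPoly (U : Finset (F × F × F)) (i : ℕ) (w : F × F × F) :
    MvPolynomial.eval ![w.1, w.2.1, w.2.2] (sigmaPoly U i) = sigmaU U w i := by
  rw [sigmaPoly, sigmaU, Finset.esymm_map_val, Finset.esymm_map_val]
  rw [map_sum]
  apply Finset.sum_congr rfl
  intro T _
  rw [map_prod]
  exact Finset.prod_congr rfl (fun u _ => eval_linForm u w)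

/-- every monomial of a polynomial of total degree ≤ 1 -/
theorem degree_le_one_decomp (f : MvPolynomial (Fin 3) F) (hf : f.totalDegree ≤ 1) :
    f = MvPolynomial.C (f.coeff 0)
      + MvPolynomial.C (f.coeff (Finsupp.single 0 1)) * MvPolynomial.X 0
      + MvPolynomial.C (f.coeff (Finsupp.single 1 1)) * MvPolynomial.X 1
      + MvPolynomial.C (f.coeff (Finsupp.single 2 1)) * MvPolynomial.X 2 := by
  apply MvPolynomial.ext
  intro m
  classical
  have hclass : m = 0 ∨ m = Finsupp.single 0 1 ∨ m = Finsupp.single 1 1 ∨ m = Finsupp.single 2 1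
      ∨ f.coeff m = 0 := by
    by_cases hm : f.coeff m = 0
    · tauto
    · have hmem : m ∈ f.support := MvPolynomial.mem_support_iff.mpr hm
      have hdeg : (m.sum fun _ e => e) ≤ 1 := le_trans (MvPolynomial.le_totalDegree hmem) hf
      have hsum3 : m 0 + m 1 + m 2 ≤ 1 := by
        have : (m.sum fun _ e => e) = ∑ i : Fin 3, m i := by
          rw [Finsupp.sum_fintype]
          intro i; rfl
        rw [this, Fin.sum_univ_three] at hdeg
        exact hdeg
      rcases Nat.lt_or_ge (m 0 + m 1 + m 2) 1 with hlt | hge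
      · left
        have h0 : m 0 = 0 := by omega
        have h1 : m 1 = 0 := by omega
        have h2' : m 2 = 0 := by omega
        ext i
        fin_cases i <;> simpa [h0, h1, h2']
      · have heq : m 0 + m 1 + m 2 = 1 := le_antisymm hsum3 hge
        rcases Nat.eq_zero_or_pos (m 0) with h0 | h0
        · rcases Nat.eq_zero_or_pos (m 1) with h1 | h1
          · right; right; right; left
            have h2' : m 2 = 1 := by omega
            ext i
            fin_cases i <;> simp [h0, h1, h2', Finsupp.single_apply]
          · right; right; left
            have h1' : m 1 = 1 := by omega
            have h2' : m 2 = 0 := by omega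
            ext i
            fin_cases i <;> simp [h0, h1', h2', Finsupp.single_apply]
        · right; left
          have h0' : m 0 = 1 := by omega
          have h1 : m 1 = 0 := by omega
          have h2' : m 2 = 0 := by omega
          ext i
          fin_cases i <;> simp [h0', h1, h2', Finsupp.single_apply]
  have hne : ∀ (i j : Fin 3), i ≠ j → (Finsupp.single i 1 : Fin 3 →₀ ℕ) ≠ Finsupp.single j 1 := by
    intro i j hij h
    have := Finsupp.single_left_injective (α := Fin 3) (one_ne_zero (α := ℕ)) h
    exact hij this
  have hsne : ∀ (i : Fin 3), (Finsupp.single i 1 : Fin 3 →₀ ℕ) ≠ 0 := by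
    intro i h
    have := DFunLike.congr_fun h i
    simp [Finsupp.single_apply] at this
  simp only [MvPolynomial.coeff_add, MvPolynomial.coeff_C, MvPolynomial.coeff_C_mul,
    MvPolynomial.coeff_X']
  rcases hclass with rfl | rfl | rfl | rfl | hzero
  · simp [hsne 0, hsne 1, hsne 2, (hsne 0).symm, (hsne 1).symm, (hsne 2).symm]
  · simp [Finsupp.single_eq_single_iff, hsne 0, (hsne 0).symm]
  · simp [Finsupp.single_eq_single_iff, hsne 1, (hsne 1).symm]
  · simp [Finsupp.single_eq_single_iff, hsne 2, (hsne 2).symm]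
  · rw [hzero]
    split_ifs <;> simp_all

end Poly

set_option linter.unusedSectionVars false
section Main
variable {F : Type*} [Field F] [Fintype F] [DecidableEq F]

theorem dot3_neg_right {u w : F × F × F} : dot3 u (-w) = - dot3 u w := by
  simp only [dot3, Prod.fst_neg, Prod.snd_neg]; ring

theorem dot3_zero_right {u : F × F × F} : dot3 u 0 = 0 := by simp [dot3]

theorem dot3_combo {γ δ : F} {x y w : F × F × F} :
    dot3 (γ • x + δ • y) w = γ * dot3 x w + δ * dot3 y w := by
  rw [dot3_add_left, dot3_smul_left, dot3_smul_left]

theorem quadQ_neg {x : F × F × F} : quadQ (-x) = quadQ x := by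
  simp only [quadQ, Prod.fst_neg, Prod.snd_neg]; ring

theorem two_ne_zero_of_card {p h : ℕ} (hp : p.Prime) (hodd : Odd p) (hh : 1 ≤ h)
    (hcard : Fintype.card F = p ^ h) : (2:F) ≠ 0 := by
  have hpF : (p : F) = 0 := by
    have h0 : ((Fintype.card F : F)) = 0 := FiniteField.cast_card_eq_zero F
    rw [hcard] at h0
    push_cast at h0
    exact pow_eq_zero_iff (Nat.one_le_iff_ne_zero.mp hh) |>.mp h0
  intro h2
  have hd2 : ringChar F ∣ 2 := ringChar.dvd (by exact_mod_cast h2)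
  have hdp : ringChar F ∣ p := ringChar.dvd (by exact_mod_cast hpF)
  rcases hp.eq_one_or_self_of_dvd _ hdp with h1 | hpc
  · exact CharP.ringChar_ne_one h1
  · rw [hpc] at hd2
    have hp2 : p ≤ 2 := Nat.le_of_dvd (by norm_num) hd2
    have : p ≠ 2 := by
      intro hh2; rw [hh2] at hodd; exact (Nat.not_odd_iff_even.mpr (by norm_num)) hodd
    have := hp.two_le
    omega

theorem dicho (h2 : (2:F) ≠ 0)
    (U : Finset (F × F × F)) (hU : NoDetermine U)
    (hUcard : U.card = Fintype.card F ^ 2 - 2)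
    (hsum : ∑ u ∈ U, u = 0)
    (v₁ v₂ : F × F × F) (hv₁ : v₁ ≠ 0) (hv₂ : v₂ ≠ 0)
    (hsig : ∀ w : F × F × F, sigmaU U w 2 = dot3 v₁ w * dot3 v₂ w)
    (t : F × F × F) (ht0 : t ≠ 0) (hQt : quadQ t = 0) :
    (∃ γ δ : F, t = γ • v₁ + δ • v₂) ∨ (∃ c : F, v₂ = c • v₁) := by
  obtain ⟨a, w₁, w₂, htw₁, htw₂, hker, hspan, hmiss, hsq⟩ :=
    keyLemma h2 U hU hUcard hsum t ht0 hQt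
  set p := dot3 v₁ w₁ with hp
  set q := dot3 v₁ w₂ with hq
  set r := dot3 v₂ w₁ with hr
  set s := dot3 v₂ w₂ with hs
  set k := dot3 a w₁ with hk
  set l := dot3 a w₂ with hl
  have e1 : p * r = k ^ 2 := by rw [hp, hr, hk, ← hsig w₁, hsq w₁ htw₁]
  have e2 : q * s = l ^ 2 := by rw [hq, hs, hl, ← hsig w₂, hsq w₂ htw₂]
  have htw12 : dot3 t (w₁ + w₂) = 0 := by rw [dot3_add_right, htw₁, htw₂]; ring
  have e3 : (p + q) * (r + s) = (k + l) ^ 2 := by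
    have h1 := hsq (w₁ + w₂) htw12
    rw [hsig (w₁ + w₂)] at h1
    rw [dot3_add_right, dot3_add_right, dot3_add_right] at h1
    exact h1
  have e5 : (p * s - q * r) ^ 2 = 0 := by
    have e4 : p * s + q * r = 2 * (k * l) := by linear_combination e3 - e1 - e2
    linear_combination (p*s + q*r + 2*k*l) * e4 - 4*l^2*e1 - 4*(p*r)*e2
  have hdet : p * s = q * r := by
    have := pow_eq_zero_iff (n := 2) (by norm_num) |>.mp e5
    linear_combination this
  by_cases hpq : p = 0 ∧ q = 0
  · obtain ⟨μ, hμ⟩ := hker v₁ hpq.1 hpq.2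
    have hμ0 : μ ≠ 0 := by
      intro h0; rw [h0, zero_smul] at hμ; exact hv₁ hμ
    left
    refine ⟨μ⁻¹, 0, ?_⟩
    rw [zero_smul, add_zero, hμ, smul_smul, inv_mul_cancel₀ hμ0, one_smul]
  · have hcase : p ≠ 0 ∨ q ≠ 0 := by tauto
    rcases hcase with hp0 | hq0
    · obtain ⟨μ, hμ⟩ := hker (r • v₁ + (-p) • v₂)
        (by rw [dot3_combo, ← hp, ← hr]; ring)
        (by rw [dot3_combo, ← hq, ← hs]; linear_combination -hdet)
      by_cases hμ0 : μ = 0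
      · right
        rw [hμ0, zero_smul] at hμ
        refine ⟨p⁻¹ * r, ?_⟩
        have : r • v₁ = p • v₂ := by
          have := hμ
          rw [add_eq_zero_iff_eq_neg] at this
          rw [this]; simp
        rw [← smul_smul, this, smul_smul, inv_mul_cancel₀ hp0, one_smul]
      · left
        refine ⟨μ⁻¹ * r, μ⁻¹ * (-p), ?_⟩
        rw [← smul_smul, ← smul_smul, ← smul_add, hμ, smul_smul, inv_mul_cancel₀ hμ0, one_smul]
    · obtain ⟨μ, hμ⟩ := hker (s • v₁ + (-q) • v₂)
        (by rw [dot3_combo, ← hp, ← hr]; linear_combination hdet)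
        (by rw [dot3_combo, ← hq, ← hs]; ring)
      by_cases hμ0 : μ = 0
      · right
        rw [hμ0, zero_smul] at hμ
        refine ⟨q⁻¹ * s, ?_⟩
        have : s • v₁ = q • v₂ := by
          have := hμ
          rw [add_eq_zero_iff_eq_neg] at this
          rw [this]; simp
        rw [← smul_smul, this, smul_smul, inv_mul_cancel₀ hq0, one_smul]
      · left
        refine ⟨μ⁻¹ * s, μ⁻¹ * (-q), ?_⟩
        rw [← smul_smul, ← smul_smul, ← smul_add, hμ, smul_smul, inv_mul_cancel₀ hμ0, one_smul]

end Main

set_option linter.unusedSectionVars false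
section Sign
variable {F : Type*} [Field F] [Fintype F] [DecidableEq F]

theorem signLemma (h2 : (2:F) ≠ 0)
    (U : Finset (F × F × F)) (hU : NoDetermine U)
    (hUcard : U.card = Fintype.card F ^ 2 - 2)
    (hsum : ∑ u ∈ U, u = 0)
    (m : F × F × F)
    (hm : ∀ w : F × F × F, sigmaU U w 2 = dot3 m w ^ 2)
    (t : F × F × F) (ht0 : t ≠ 0) (hQt : quadQ t = 0) :
    ∃ a μ : F × F × F, ∃ ν : F, (m = a + ν • t ∨ m = -a + ν • t) ∧ a = μ ∧
      (∀ u ∈ U, ∀ ρ : F, u ≠ a + ρ • t ∧ u ≠ -a + ρ • t) := by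
  obtain ⟨a, w₁, w₂, htw₁, htw₂, hker, hspan, hmiss, hsq⟩ :=
    keyLemma h2 U hU hUcard hsum t ht0 hQt
  set p := dot3 m w₁ with hp
  set q := dot3 m w₂ with hq
  set k := dot3 a w₁ with hk
  set l := dot3 a w₂ with hl
  have e1 : p ^ 2 = k ^ 2 := by rw [hp, hk, ← hm w₁, hsq w₁ htw₁]
  have e2 : q ^ 2 = l ^ 2 := by rw [hq, hl, ← hm w₂, hsq w₂ htw₂]
  have htw12 : dot3 t (w₁ + w₂) = 0 := by rw [dot3_add_right, htw₁, htw₂]; ring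
  have e3 : (p + q) ^ 2 = (k + l) ^ 2 := by
    have h1 := hsq (w₁ + w₂) htw12
    rw [hm (w₁ + w₂)] at h1
    rw [dot3_add_right, dot3_add_right] at h1
    exact h1
  have e4 : p * q = k * l := by
    apply mul_left_cancel₀ h2
    linear_combination e3 - e1 - e2
  have plus : (p = k ∧ q = l) ∨ (p = -k ∧ q = -l) := by
    by_cases hpk : p = k
    · by_cases hk0 : k = 0
      · rcases mul_eq_zero.mp (show (q - l) * (q + l) = 0 by linear_combination e2) with hc | hc
        · left; exact ⟨hpk, by linear_combination hc⟩
        · right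
          refine ⟨by rw [hpk, hk0]; ring, by linear_combination hc⟩
      · left
        refine ⟨hpk, ?_⟩
        apply mul_left_cancel₀ hk0
        linear_combination e4 - q * hpk
    · have hpk' : p = -k := by
        rcases mul_eq_zero.mp (show (p - k) * (p + k) = 0 by linear_combination e1) with hc | hc
        · exact absurd (by linear_combination hc) hpk
        · linear_combination hc
      have hk0 : k ≠ 0 := by
        intro h0; apply hpk; rw [hpk', h0]; ring
      right
      refine ⟨hpk', ?_⟩
      apply mul_left_cancel₀ hk0
      have : -k * q = k * l := by rw [← hpk']; linear_combination e4
      linear_combination -this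
  rcases plus with ⟨h1, h2'⟩ | ⟨h1, h2'⟩
  · obtain ⟨μ, hμ⟩ := hker (m - a)
      (by rw [dot3_sub_left, ← hp, ← hk, h1]; ring)
      (by rw [dot3_sub_left, ← hq, ← hl, h2']; ring)
    exact ⟨a, a, μ, Or.inl (by rw [← hμ]; abel), rfl, hmiss⟩
  · obtain ⟨μ, hμ⟩ := hker (m + a)
      (by rw [dot3_add_left, ← hp, ← hk, h1]; ring)
      (by rw [dot3_add_left, ← hq, ← hl, h2']; ring)
    exact ⟨a, a, μ, Or.inr (by rw [← hμ]; abel), rfl, hmiss⟩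

end Sign


theorem stmt_9 {p h : ℕ} (hp : p.Prime) (hodd : Odd p) (hh : 1 ≤ h)
    {F : Type*} [Field F] [Fintype F] [DecidableEq F]
    (hcard : Fintype.card F = p ^ h)
    (U : Finset (F × F × F))
    (hUcard : U.card = Fintype.card F ^ 2 - 2)
    (hU : NoDetermine U)
    (hsum : ∑ u ∈ U, u = 0)
    (hred : ∃ f g : MvPolynomial (Fin 3) F,
      f.totalDegree = 1 ∧ g.totalDegree = 1 ∧ sigmaPoly U 2 = f * g) :
    ∃ v : F × F × F, v ∉ U ∧ NoDetermine (insert v U) := by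
  classical
  have h2 : (2:F) ≠ 0 := two_ne_zero_of_card hp hodd hh hcard
  obtain ⟨f, g, hf, hg, hfg⟩ := hred
  set cf := f.coeff 0 with hcf
  set v₁ : F × F × F := (f.coeff (Finsupp.single 0 1), f.coeff (Finsupp.single 1 1),
    f.coeff (Finsupp.single 2 1)) with hv₁def
  set cg := g.coeff 0 with hcgdef
  set v₂ : F × F × F := (g.coeff (Finsupp.single 0 1), g.coeff (Finsupp.single 1 1),
    g.coeff (Finsupp.single 2 1)) with hv₂def
  have hfeval : ∀ w : F × F × F, MvPolynomial.eval ![w.1, w.2.1, w.2.2] f = cf + dot3 v₁ w := by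
    intro w
    conv_lhs => rw [degree_le_one_decomp f (le_of_eq hf)]
    simp only [dot3, map_add, map_mul, MvPolynomial.eval_C, MvPolynomial.eval_X]
    norm_num [hv₁def, Matrix.cons_val_two, Matrix.tail_cons, Matrix.head_cons]
    ring
  have hgeval : ∀ w : F × F × F, MvPolynomial.eval ![w.1, w.2.1, w.2.2] g = cg + dot3 v₂ w := by
    intro w
    conv_lhs => rw [degree_le_one_decomp g (le_of_eq hg)]
    simp only [dot3, map_add, map_mul, MvPolynomial.eval_C, MvPolynomial.eval_X]
    norm_num [hv₂def, Matrix.cons_val_two, Matrix.tail_cons, Matrix.head_cons]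
    ring
  have heval : ∀ w : F × F × F, sigmaU U w 2 = (cf + dot3 v₁ w) * (cg + dot3 v₂ w) := by
    intro w
    have h1 := congrArg (MvPolynomial.eval ![w.1, w.2.1, w.2.2]) hfg
    rw [eval_sigmaPoly, map_mul, hfeval w, hgeval w] at h1
    exact h1
  have hv₁ : v₁ ≠ 0 := by
    intro h0
    rw [hv₁def, Prod.ext_iff, Prod.ext_iff] at h0
    obtain ⟨e1, e2, e3⟩ := h0
    have hfC : f = MvPolynomial.C cf := by
      conv_lhs => rw [degree_le_one_decomp f (le_of_eq hf)]
      simp only at e1 e2 e3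
      rw [e1, e2, e3]
      simp [hcf]
    rw [hfC, MvPolynomial.totalDegree_C] at hf
    exact zero_ne_one hf
  have hv₂ : v₂ ≠ 0 := by
    intro h0
    rw [hv₂def, Prod.ext_iff, Prod.ext_iff] at h0
    obtain ⟨e1, e2, e3⟩ := h0
    have hgC : g = MvPolynomial.C cg := by
      conv_lhs => rw [degree_le_one_decomp g (le_of_eq hg)]
      simp only at e1 e2 e3
      rw [e1, e2, e3]
      simp [hcgdef]
    rw [hgC, MvPolynomial.totalDegree_C] at hg
    exact zero_ne_one hg
  have hneg : ∀ w : F × F × F, sigmaU U (-w) 2 = sigmaU U w 2 := by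
    intro w
    apply mul_left_cancel₀ h2
    rw [two_mul_sigmaU, two_mul_sigmaU]
    have hdn : ∀ u : F × F × F, dot3 u (-w) = - dot3 u w := fun u => dot3_neg_right
    rw [Finset.sum_congr rfl (fun u _ => hdn u),
      Finset.sum_congr rfl (fun u _ => (by rw [hdn u]; ring : (dot3 u (-w))^2 = (dot3 u w)^2))]
    rw [Finset.sum_neg_distrib]
    ring
  have hs0 : sigmaU U 0 2 = 0 := by
    have hh2 : 2 * sigmaU U 0 2 = 0 := by
      rw [two_mul_sigmaU]
      have hz : ∀ u : F × F × F, dot3 u (0 : F × F × F) = 0 := fun u => dot3_zero_right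
      rw [Finset.sum_congr rfl (fun u _ => hz u),
        Finset.sum_congr rfl (fun u _ => (by rw [hz u]; ring : dot3 u (0:F×F×F) ^ 2 = 0))]
      simp
    exact (mul_eq_zero.mp hh2).resolve_left h2
  have hcc : cf * cg = 0 := by
    have h1 := heval 0
    rw [hs0, dot3_zero_right, dot3_zero_right, add_zero, add_zero] at h1
    exact h1.symm
  have hlin : ∀ w : F × F × F, cf * dot3 v₂ w + cg * dot3 v₁ w = 0 := by
    intro w
    have ha := heval w
    have hb := heval (-w)
    rw [hneg w, dot3_neg_right, dot3_neg_right] at hb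
    have : 2 * (cf * dot3 v₂ w + cg * dot3 v₁ w) = 0 := by linear_combination hb - ha
    exact (mul_eq_zero.mp this).resolve_left h2
  have hc00 : cf = 0 ∧ cg = 0 := by
    rcases mul_eq_zero.mp hcc with hz | hz
    · refine ⟨hz, ?_⟩
      by_contra hcg0
      apply hv₁
      have e1 : v₁.1 = 0 := by
        have l1 := hlin (1,0,0)
        rw [hz] at l1
        simp only [dot3] at l1
        have : cg * v₁.1 = 0 := by linear_combination l1
        exact (mul_eq_zero.mp this).resolve_left hcg0
      have e2 : v₁.2.1 = 0 := by
        have l1 := hlin (0,1,0)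
        rw [hz] at l1
        simp only [dot3] at l1
        have : cg * v₁.2.1 = 0 := by linear_combination l1
        exact (mul_eq_zero.mp this).resolve_left hcg0
      have e3 : v₁.2.2 = 0 := by
        have l1 := hlin (0,0,1)
        rw [hz] at l1
        simp only [dot3] at l1
        have : cg * v₁.2.2 = 0 := by linear_combination l1
        exact (mul_eq_zero.mp this).resolve_left hcg0
      exact Prod.ext e1 (Prod.ext e2 e3)
    · refine ⟨?_, hz⟩
      by_contra hcf0
      apply hv₂
      have e1 : v₂.1 = 0 := by
        have l1 := hlin (1,0,0)
        rw [hz] at l1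
        simp only [dot3] at l1
        have : cf * v₂.1 = 0 := by linear_combination l1
        exact (mul_eq_zero.mp this).resolve_left hcf0
      have e2 : v₂.2.1 = 0 := by
        have l1 := hlin (0,1,0)
        rw [hz] at l1
        simp only [dot3] at l1
        have : cf * v₂.2.1 = 0 := by linear_combination l1
        exact (mul_eq_zero.mp this).resolve_left hcf0
      have e3 : v₂.2.2 = 0 := by
        have l1 := hlin (0,0,1)
        rw [hz] at l1
        simp only [dot3] at l1
        have : cf * v₂.2.2 = 0 := by linear_combination l1
        exact (mul_eq_zero.mp this).resolve_left hcf0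
      exact Prod.ext e1 (Prod.ext e2 e3)
  have hsig : ∀ w : F × F × F, sigmaU U w 2 = dot3 v₁ w * dot3 v₂ w := by
    intro w
    rw [heval w, hc00.1, hc00.2, zero_add, zero_add]
  by_cases hpar : ∃ c : F, v₂ = c • v₁
  · -- reducible into proportional factors: σ₂ is a square, extension point exists
    obtain ⟨c, hc⟩ := hpar
    have hpick : ∃ t w : F × F × F, t ≠ 0 ∧ quadQ t = 0 ∧ dot3 t w = 0 ∧ dot3 v₁ w ≠ 0 := by
      have hcomp : v₁.1 ≠ 0 ∨ v₁.2.1 ≠ 0 ∨ v₁.2.2 ≠ 0 := by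
        by_contra hcon
        push_neg at hcon
        obtain ⟨a1, a2, a3⟩ := hcon
        exact hv₁ (Prod.ext a1 (Prod.ext a2 a3))
      rcases hcomp with hcmp | hcmp | hcmp
      · refine ⟨(0,0,1), (1,0,0), ?_, by simp [quadQ], by simp [dot3], ?_⟩
        · intro hcon
          have := congrArg (fun z : F × F × F => z.2.2) hcon
          simpa using this
        · simpa [dot3] using hcmp
      · refine ⟨(0,0,1), (0,1,0), ?_, by simp [quadQ], by simp [dot3], ?_⟩
        · intro hcon
          have := congrArg (fun z : F × F × F => z.2.2) hcon
          simpa using this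
        · simpa [dot3] using hcmp
      · refine ⟨(1,0,0), (0,0,1), ?_, by simp [quadQ], by simp [dot3], ?_⟩
        · intro hcon
          have := congrArg (fun z : F × F × F => z.1) hcon
          simpa using this
        · simpa [dot3] using hcmp
    obtain ⟨t, w, ht0, hQt, htw, hvw⟩ := hpick
    obtain ⟨a, w₁, w₂, htw₁, htw₂, hker, hspan, hmiss0, hsq⟩ :=
      keyLemma h2 U hU hUcard hsum t ht0 hQt
    have hkey := hsq w htw
    rw [hsig w, hc, dot3_smul_left] at hkey
    have hce : c = (dot3 a w / dot3 v₁ w) ^ 2 := by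
      field_simp
      linear_combination hkey
    set m : F × F × F := (dot3 a w / dot3 v₁ w) • v₁ with hmdef
    have hm : ∀ w' : F × F × F, sigmaU U w' 2 = dot3 m w' ^ 2 := by
      intro w'
      rw [hsig w', hc, dot3_smul_left, hmdef, dot3_smul_left, hce]
      ring
    have hmnotU : m ∉ U := by
      intro hmU
      obtain ⟨a', _, ν, hcase, _, hmiss⟩ := signLemma h2 U hU hUcard hsum m hm ((1:F),(0:F),(0:F))
        (fun hcon => one_ne_zero (congrArg Prod.fst hcon)) (by simp [quadQ])
      rcases hcase with hcm | hcm
      · exact (hmiss m hmU ν).1 hcm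
      · exact (hmiss m hmU ν).2 hcm
    refine ⟨m, hmnotU, ?_⟩
    intro u hu u' hu' hne hQ0
    rcases Finset.mem_insert.mp hu with rfl | huU
    · rcases Finset.mem_insert.mp hu' with rfl | hu'U
      · exact hne rfl
      · have ht0' : m - u' ≠ 0 := sub_ne_zero.mpr hne
        set d : F × F × F := m - u' with hd
        obtain ⟨a', _, ν, hcase, _, hmiss⟩ :=
          signLemma h2 U hU hUcard hsum m hm d ht0' hQ0
        have hu'd : u' = m - d := by rw [hd]; exact (sub_sub_cancel m u').symm
        rcases hcase with hcm | hcm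
        · apply (hmiss u' hu'U (ν - 1)).1
          rw [hu'd, hcm, sub_smul, one_smul]
          abel
        · apply (hmiss u' hu'U (ν - 1)).2
          rw [hu'd, hcm, sub_smul, one_smul]
          abel
    · rcases Finset.mem_insert.mp hu' with rfl | hu'U
      · have hQ0' : quadQ (m - u) = 0 := by
          rw [show m - u = -(u - m) from (neg_sub u m).symm, quadQ_neg]
          exact hQ0
        have ht0' : m - u ≠ 0 := sub_ne_zero.mpr (fun hcon => hne hcon.symm)
        set d : F × F × F := m - u with hd
        obtain ⟨a', _, ν, hcase, _, hmiss⟩ :=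
          signLemma h2 U hU hUcard hsum m hm d ht0' hQ0'
        have hud : u = m - d := by rw [hd]; exact (sub_sub_cancel m u).symm
        rcases hcase with hcm | hcm
        · apply (hmiss u huU (ν - 1)).1
          rw [hud, hcm, sub_smul, one_smul]
          abel
        · apply (hmiss u huU (ν - 1)).2
          rw [hud, hcm, sub_smul, one_smul]
          abel
      · exact hU u huU u' hu'U hne hQ0
  · -- impossible: all conic points would lie in a plane
    exfalso
    have hd : ∀ t : F × F × F, t ≠ 0 → quadQ t = 0 → ∃ γ δ : F, t = γ • v₁ + δ • v₂ :=
      fun t ht0 hQt =>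
        (dicho h2 U hU hUcard hsum v₁ v₂ hv₁ hv₂ hsig t ht0 hQt).resolve_right hpar
    obtain ⟨γ₁, δ₁, h1⟩ := hd ((1:F),(0:F),(0:F))
      (fun hcon => one_ne_zero (congrArg Prod.fst hcon)) (by simp [quadQ])
    obtain ⟨γ₂, δ₂, hb⟩ := hd ((0:F),(0:F),(1:F))
      (fun hcon => one_ne_zero (congrArg (fun z : F × F × F => z.2.2) hcon)) (by simp [quadQ])
    obtain ⟨γ₃, δ₃, hcq⟩ := hd ((1:F),(1:F),(1:F))
      (fun hcon => one_ne_zero (congrArg Prod.fst hcon)) (by simp [quadQ])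
    have a1 : (1:F) = γ₁ * v₁.1 + δ₁ * v₂.1 := by
      have := congrArg Prod.fst h1
      simpa using this
    have a2 : (0:F) = γ₁ * v₁.2.1 + δ₁ * v₂.2.1 := by
      have := congrArg (fun z : F × F × F => z.2.1) h1
      simpa using this
    have a3 : (0:F) = γ₁ * v₁.2.2 + δ₁ * v₂.2.2 := by
      have := congrArg (fun z : F × F × F => z.2.2) h1
      simpa using this
    have b1 : (0:F) = γ₂ * v₁.1 + δ₂ * v₂.1 := by
      have := congrArg Prod.fst hb
      simpa using this
    have b2 : (0:F) = γ₂ * v₁.2.1 + δ₂ * v₂.2.1 := by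
      have := congrArg (fun z : F × F × F => z.2.1) hb
      simpa using this
    have b3 : (1:F) = γ₂ * v₁.2.2 + δ₂ * v₂.2.2 := by
      have := congrArg (fun z : F × F × F => z.2.2) hb
      simpa using this
    have c1 : (1:F) = γ₃ * v₁.1 + δ₃ * v₂.1 := by
      have := congrArg Prod.fst hcq
      simpa using this
    have c2 : (1:F) = γ₃ * v₁.2.1 + δ₃ * v₂.2.1 := by
      have := congrArg (fun z : F × F × F => z.2.1) hcq
      simpa using this
    have c3 : (1:F) = γ₃ * v₁.2.2 + δ₃ * v₂.2.2 := by
      have := congrArg (fun z : F × F × F => z.2.2) hcq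
      simpa using this
    have d1 : (0:F) = (γ₃-γ₁-γ₂) * v₁.1 + (δ₃-δ₁-δ₂) * v₂.1 := by
      linear_combination c1 - a1 - b1
    have d2 : (1:F) = (γ₃-γ₁-γ₂) * v₁.2.1 + (δ₃-δ₁-δ₂) * v₂.2.1 := by
      linear_combination c2 - a2 - b2
    have d3 : (0:F) = (γ₃-γ₁-γ₂) * v₁.2.2 + (δ₃-δ₁-δ₂) * v₂.2.2 := by
      linear_combination c3 - a3 - b3
    by_cases hD : γ₁*(δ₃-δ₁-δ₂) - (γ₃-γ₁-γ₂)*δ₁ = 0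
    · have hδ₁ : δ₁ = 0 := by
        linear_combination δ₁*d2 - (δ₃-δ₁-δ₂)*a2 - v₁.2.1*hD
      have hδ₀ : δ₃-δ₁-δ₂ = 0 := by
        linear_combination (δ₃-δ₁-δ₂)*a1 - δ₁*d1 + v₁.1*hD
      have hγ₁ : γ₁ = 0 := by
        linear_combination γ₁*d2 - (γ₃-γ₁-γ₂)*a2 + γ₁*v₂.2.1*hδ₀ - (γ₃-γ₁-γ₂)*v₂.2.1*hδ₁
      have : (1:F) = 0 := by
        linear_combination a1 + v₁.1*hγ₁ + v₂.1*hδ₁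
      exact one_ne_zero this
    · have hx3 : v₁.2.2 = 0 := by
        have hDx : (γ₁*(δ₃-δ₁-δ₂) - (γ₃-γ₁-γ₂)*δ₁) * v₁.2.2 = 0 := by
          linear_combination -(δ₃-δ₁-δ₂)*a3 + δ₁*d3
        exact (mul_eq_zero.mp hDx).resolve_left hD
      have hy3 : v₂.2.2 = 0 := by
        have hDy : (γ₁*(δ₃-δ₁-δ₂) - (γ₃-γ₁-γ₂)*δ₁) * v₂.2.2 = 0 := by
          linear_combination -γ₁*d3 + (γ₃-γ₁-γ₂)*a3
        exact (mul_eq_zero.mp hDy).resolve_left hD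
      have : (1:F) = 0 := by
        linear_combination b3 + γ₂*hx3 + δ₂*hy3
      exact one_ne_zero this
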